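/- Let M be an additive abelian group and S a submonoid of M that is semisaturated in M. Then Int(S) is saturated in the following sense: for every m in the subgroup of M generated by S and every integer n ≥ 1, if n•m ∈ Int(S) then m ∈ Int(S). -/

import Mathlib

/-- The *interior* of a subset `S` of an additive commutative monoid:
`{x ∈ S | ∀ y ∈ S, ∃ n ∈ ℕ, ∃ z ∈ S, n • x = y + z}`. -/
def setInterior {M : Type*} [AddCommMonoid M] (S : Set M) : Set M :=
  {x | x ∈ S ∧ ∀ y ∈ S, ∃ n : ℕ, ∃ z ∈ S, n • x = y + z}

theorem aux_diff {M : Type*} [AddCommGroup M] (S : AddSubmonoid M)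
    {m : M} (hm : m ∈ AddSubgroup.closure (S : Set M)) :
    ∃ a ∈ S, ∃ b ∈ S, m = a - b := by
  induction hm using AddSubgroup.closure_induction with
  | mem x hx => exact ⟨x, hx, 0, S.zero_mem, by simp⟩
  | zero => exact ⟨0, S.zero_mem, 0, S.zero_mem, by simp⟩
  | add x y _ _ hx hy =>
    obtain ⟨a, ha, b, hb, rfl⟩ := hx
    obtain ⟨c, hc, d, hd, rfl⟩ := hy
    exact ⟨a + c, S.add_mem ha hc, b + d, S.add_mem hb hd, by abel⟩
  | neg x _ hx =>
    obtain ⟨a, ha, b, hb, rfl⟩ := hx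
    exact ⟨b, hb, a, ha, by abel⟩

/-- If `S` is a semisaturated submonoid of an additive abelian group `M`,
then `Int(S)` is saturated: for every `m` in the subgroup generated by `S` and
every `n ≥ 1`, if `n • m ∈ Int(S)` then `m ∈ Int(S)`. -/
theorem setInterior_saturated_of_semisaturated {M : Type*} [AddCommGroup M]
    (S : AddSubmonoid M)
    (hsemi : ∀ m : M, 2 • m ∈ S → 3 • m ∈ S → m ∈ S) :
    ∀ m ∈ AddSubgroup.closure (S : Set M), ∀ n : ℕ, 1 ≤ n →
      n • m ∈ setInterior (S : Set M) → m ∈ setInterior (S : Set M) := by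
  intro m hm n hn hnm
  obtain ⟨hnmS, hnmInt⟩ := hnm
  obtain ⟨a, ha, b, hb, hab⟩ := aux_diff S hm
  -- get k, z with (k*n) • m = b + z
  obtain ⟨k, z, hz, hkz⟩ := hnmInt b hb
  rw [smul_smul] at hkz
  set N := k * n with hN
  -- N • m ∈ S and (N+1) • m ∈ S
  have hNm : N • m ∈ S := by
    rw [hN, ← smul_smul]; exact AddSubmonoid.nsmul_mem S hnmS k
  have hN1m : (N + 1) • m ∈ S := by
    have : (N + 1) • m = z + a := by
      rw [add_smul, one_smul, hkz, hab]; abel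
    rw [this]; exact S.add_mem hz ha
  -- key: all multiples j ≥ N^2 are in S
  have hbig : ∀ j : ℕ, N * N ≤ j → j • m ∈ S := by
    intro j hj
    rcases Nat.eq_zero_or_pos N with h0 | hNpos
    · have : (N + 1) = 1 := by omega
      have hj0 : j • m = j • ((N+1) • m) := by rw [this, one_smul]
      rw [hj0]; exact AddSubmonoid.nsmul_mem S hN1m j
    · have hqr : j = (j / N - j % N) * N + (j % N) * (N + 1) := by
        have h1 : j % N < N := Nat.mod_lt _ hNpos
        have h2 : N ≤ j / N := Nat.le_div_iff_mul_le hNpos |>.2 (by nlinarith)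
        have h3 : j % N ≤ j / N := le_trans (le_of_lt h1) h2
        have h5 : (j % N) * N ≤ (j / N) * N := Nat.mul_le_mul_right _ h3
        calc j = N * (j / N) + j % N := (Nat.div_add_mod j N).symm
          _ = (j / N) * N + j % N := by rw [Nat.mul_comm]
          _ = ((j / N) * N - (j % N) * N) + ((j % N) * N + j % N) := by
              rw [← Nat.add_assoc, Nat.sub_add_cancel h5]
          _ = (j / N - j % N) * N + (j % N) * (N + 1) := by
              rw [Nat.sub_mul, Nat.mul_succ]
      rw [hqr, add_smul, mul_smul (j / N - j % N) N m, mul_smul (j % N) (N + 1) m]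
      exact S.add_mem (AddSubmonoid.nsmul_mem S hNm _) (AddSubmonoid.nsmul_mem S hN1m _)
  -- descend by semisaturation
  have hall : ∀ d : ℕ, ∀ j : ℕ, 1 ≤ j → N * N ≤ j + d → j • m ∈ S := by
    intro d
    induction d with
    | zero => intro j _ hj; exact hbig j (by omega)
    | succ d ih =>
      intro j hj1 hjd
      by_cases h : N * N ≤ j + d
      · exact ih j hj1 h
      · have h2 : (2 * j) • m ∈ S := ih (2 * j) (by omega) (by omega)
        have h3 : (3 * j) • m ∈ S := ih (3 * j) (by omega) (by omega)
        rw [mul_smul] at h2 h3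
        exact hsemi (j • m) h2 h3
  have hmS : m ∈ S := by
    have := hall (N * N) 1 le_rfl (by omega)
    rwa [one_smul] at this
  refine ⟨hmS, fun y hy => ?_⟩
  obtain ⟨k', z', hz', hk'⟩ := hnmInt y hy
  exact ⟨k' * n, z', hz', by rwa [mul_smul]⟩
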